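/- For all natural numbers a, b one has {tr((XZ)^a), tr((XZ)^b)} = 0 in 𝒪ₙ; that is, the traces of powers of the product XZ pairwise commute under the quasi-Poisson bracket induced on the representation space of the tadpole quiver. -/

import Mathlib

set_option maxHeartbeats 1000000


open Matrix Finset

/-- The polynomial ring `𝒪ₙ = ℂ[X_{ij}, Z_{ij}]` in the entries of two `n × n` matrices. -/
noncomputable abbrev Oring (n : ℕ) : Type :=
  MvPolynomial ((Fin n × Fin n) ⊕ (Fin n × Fin n)) ℂ

/-- The matrix `X` with polynomial entries `X_{ij}`. -/
noncomputable def Xm (n : ℕ) : Matrix (Fin n) (Fin n) (Oring n) :=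
  Matrix.of fun i j => MvPolynomial.X (Sum.inl (i, j))

/-- The matrix `Z` with polynomial entries `Z_{ij}`. -/
noncomputable def Zm (n : ℕ) : Matrix (Fin n) (Fin n) (Oring n) :=
  Matrix.of fun i j => MvPolynomial.X (Sum.inr (i, j))

/-- Kronecker delta in `𝒪ₙ`. -/
noncomputable def kd (n : ℕ) (i j : Fin n) : Oring n := if i = j then 1 else 0

section Aux
variable {n : ℕ} (br : Oring n → Oring n → Oring n)

section Basic
variable (hadd : ∀ f g h : Oring n, br f (g + h) = br f g + br f h)
variable (hsmul : ∀ (c : ℂ) (f g : Oring n), br f (c • g) = c • br f g)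
variable (hleib : ∀ f g h : Oring n, br f (g * h) = br f g * h + g * br f h)
variable (hanti : ∀ f g : Oring n, br f g = - br g f)

include hsmul in
lemma br_zero (f : Oring n) : br f 0 = 0 := by
  simpa using hsmul 0 f 0

include hleib in
lemma br_one (f : Oring n) : br f 1 = 0 := by
  have := hleib f 1 1
  simp at this
  exact this

include hadd hsmul in
lemma br_sum {ι : Type*} (f : Oring n) (s : Finset ι) (g : ι → Oring n) :
    br f (∑ i ∈ s, g i) = ∑ i ∈ s, br f (g i) := by
  classical
  induction s using Finset.induction_on with
  | empty => simpa using br_zero br hsmul f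
  | insert a s h ih => simp [Finset.sum_insert h, hadd, ih]

include hadd hanti in
lemma br_add' (f g h : Oring n) : br (f + g) h = br f h + br g h := by
  rw [hanti, hadd, hanti h f, hanti h g]; ring

include hleib hanti in
lemma br_mul' (f g h : Oring n) : br (f * g) h = br f h * g + f * br g h := by
  rw [hanti, hleib, hanti h f, hanti h g]; ring

include hadd hsmul hanti in
lemma br_sum' {ι : Type*} (f : Oring n) (s : Finset ι) (g : ι → Oring n) :
    br (∑ i ∈ s, g i) f = ∑ i ∈ s, br (g i) f := by
  rw [hanti, br_sum br hadd hsmul]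
  simp [hanti f]

include hsmul hanti in
lemma br_smul' (c : ℂ) (f g : Oring n) : br (c • f) g = c • br f g := by
  rw [hanti, hsmul, hanti g]; simp

end Basic

lemma kdsum1 {n : ℕ} (g : Fin n → Oring n) (u : Fin n) :
    ∑ k, kd n u k * g k = g u := by simp [kd]

lemma kdsum2 {n : ℕ} (g : Fin n → Oring n) (v : Fin n) :
    ∑ k, g k * kd n k v = g v := by simp [kd]

section Gen
variable (hadd : ∀ f g h : Oring n, br f (g + h) = br f g + br f h)
variable (hsmul : ∀ (c : ℂ) (f g : Oring n), br f (c • g) = c • br f g)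
variable (hleib : ∀ f g h : Oring n, br f (g * h) = br f g * h + g * br f h)
variable (hanti : ∀ f g : Oring n, br f g = - br g f)
variable (hXX : ∀ i j u v : Fin n,
      br (Xm n i j) (Xm n u v) =
        (2⁻¹ : ℂ) • ((Xm n ^ 2) u j * kd n i v) - (2⁻¹ : ℂ) • (kd n u j * (Xm n ^ 2) i v))
variable (hZZ : ∀ i j u v : Fin n,
      br (Zm n i j) (Zm n u v) =
        (2⁻¹ : ℂ) • (kd n u j * (Zm n ^ 2) i v) - (2⁻¹ : ℂ) • ((Zm n ^ 2) u j * kd n i v))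
variable (hXZ : ∀ i j u v : Fin n,
      br (Xm n i j) (Zm n u v) =
        (2⁻¹ : ℂ) • ((Zm n * Xm n) u j * kd n i v)
          + (2⁻¹ : ℂ) • (kd n u j * (Xm n * Zm n) i v)
          + (2⁻¹ : ℂ) • (Zm n u j * Xm n i v)
          - (2⁻¹ : ℂ) • (Xm n u j * Zm n i v))

include hadd hsmul hleib hXX hXZ in
lemma brXA (i j u v : Fin n) :
    br (Xm n i j) ((Xm n * Zm n) u v) =
      MvPolynomial.C (2⁻¹:ℂ) * ((Xm n * (Zm n * Xm n)) u j * kd n i v)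
      - MvPolynomial.C (2⁻¹:ℂ) * (kd n u j * ((Xm n ^ 2) * Zm n) i v)
      + MvPolynomial.C (2⁻¹:ℂ) * (Xm n u j * (Xm n * Zm n) i v)
      + MvPolynomial.C (2⁻¹:ℂ) * ((Xm n * Zm n) u j * Xm n i v) := by
  conv_lhs => rw [Matrix.mul_apply]
  rw [br_sum br hadd hsmul]
  simp only [hleib, hXX, hXZ, MvPolynomial.smul_eq_C_mul]
  by_cases hiv : i = v <;> by_cases huj : u = j <;>
  simp [kd, pow_two, Matrix.mul_apply, Finset.mul_sum, Finset.sum_mul, mul_ite, ite_mul,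
    mul_zero, zero_mul, mul_one, one_mul, mul_add, mul_sub, add_mul, sub_mul,
    Finset.sum_add_distrib, Finset.sum_sub_distrib, hiv, huj] <;>
  simp only [mul_comm, mul_left_comm, mul_assoc] <;>
  abel
include hadd hsmul hleib hanti hZZ hXZ in
lemma brZA (i j u v : Fin n) :
    br (Zm n i j) ((Xm n * Zm n) u v) =
      - (MvPolynomial.C (2⁻¹:ℂ) * (kd n u j * ((Zm n * Xm n) * Zm n) i v))
      - MvPolynomial.C (2⁻¹:ℂ) * ((Xm n * Zm n ^ 2) u j * kd n i v)
      - MvPolynomial.C (2⁻¹:ℂ) * ((Xm n * Zm n) u j * Zm n i v)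
      + MvPolynomial.C (2⁻¹:ℂ) * (Zm n u j * (Xm n * Zm n) i v) := by
  have hZX : ∀ i j u v : Fin n, br (Zm n i j) (Xm n u v) =
      -((2⁻¹ : ℂ) • ((Zm n * Xm n) i v * kd n u j)
          + (2⁻¹ : ℂ) • (kd n i v * (Xm n * Zm n) u j)
          + (2⁻¹ : ℂ) • (Zm n i v * Xm n u j)
          - (2⁻¹ : ℂ) • (Xm n i v * Zm n u j)) := by
    intro i j u v
    rw [hanti, hXZ]
  conv_lhs => rw [Matrix.mul_apply]
  rw [br_sum br hadd hsmul]
  simp only [hleib, hZX, hZZ, MvPolynomial.smul_eq_C_mul]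
  by_cases hiv : i = v <;> by_cases huj : u = j <;>
  simp [kd, pow_two, Matrix.mul_apply, Finset.mul_sum, Finset.sum_mul, mul_ite, ite_mul,
    mul_zero, zero_mul, mul_one, one_mul, mul_add, mul_sub, add_mul, sub_mul,
    Finset.sum_add_distrib, Finset.sum_sub_distrib, hiv, huj] <;>
  simp only [mul_comm, mul_left_comm, mul_assoc] <;>
  abel

include hadd hsmul hleib hanti hXX hZZ hXZ in
lemma brAA (i j u v : Fin n) :
    br ((Xm n * Zm n) i j) ((Xm n * Zm n) u v) =
      MvPolynomial.C (2⁻¹:ℂ) * (((Xm n * Zm n) ^ 2) u j * kd n i v)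
      - MvPolynomial.C (2⁻¹:ℂ) * (kd n u j * ((Xm n * Zm n) ^ 2) i v) := by
  conv_lhs => rw [Matrix.mul_apply]
  rw [br_sum' br hadd hsmul hanti]
  simp only [br_mul' br hleib hanti, brXA br hadd hsmul hleib hXX hXZ,
    brZA br hadd hsmul hleib hanti hZZ hXZ]
  trans ((∑ k, (Xm n * (Zm n * Xm n)) u k * Zm n k j) * (MvPolynomial.C (2⁻¹:ℂ) * kd n i v)
      - (∑ k, kd n u k * (((Xm n ^ 2) * Zm n) i v * Zm n k j)) * MvPolynomial.C (2⁻¹:ℂ)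
      + (∑ k, Xm n u k * Zm n k j) * (MvPolynomial.C (2⁻¹:ℂ) * (Xm n * Zm n) i v)
      + (∑ k, (Xm n * Zm n) u k * Zm n k j) * (MvPolynomial.C (2⁻¹:ℂ) * Xm n i v)
      - (∑ k, Xm n i k * ((Zm n * Xm n) * Zm n) k v) * (MvPolynomial.C (2⁻¹:ℂ) * kd n u j)
      - (∑ k, Xm n i k * kd n k v) * (MvPolynomial.C (2⁻¹:ℂ) * (Xm n * Zm n ^ 2) u j)
      - (∑ k, Xm n i k * Zm n k v) * (MvPolynomial.C (2⁻¹:ℂ) * (Xm n * Zm n) u j)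
      + (∑ k, Xm n i k * (Xm n * Zm n) k v) * (MvPolynomial.C (2⁻¹:ℂ) * Zm n u j))
  · simp only [Finset.sum_mul, ← Finset.sum_sub_distrib, ← Finset.sum_add_distrib]
    exact Finset.sum_congr rfl fun k _ => by ring
  · rw [kdsum1, kdsum2]
    simp only [← Matrix.mul_apply]
    have e1 : Xm n * (Zm n * Xm n) * Zm n = (Xm n * Zm n) ^ 2 := by
      simp only [pow_two, mul_assoc]
    have e2 : Xm n * (Zm n * Xm n * Zm n) = (Xm n * Zm n) ^ 2 := by
      simp only [pow_two, mul_assoc]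
    have e3 : Xm n * Zm n * Zm n = Xm n * Zm n ^ 2 := by
      simp only [pow_two, mul_assoc]
    have e4 : Xm n ^ 2 * Zm n = Xm n * (Xm n * Zm n) := by
      simp only [pow_two, mul_assoc]
    rw [e1, e2, e3, e4]
    ring

section Pow
variable (W : Matrix (Fin n) (Fin n) (Oring n))
variable (hWW : ∀ i j u v : Fin n, br (W i j) (W u v) =
    MvPolynomial.C (2⁻¹:ℂ) * ((W ^ 2) u j * kd n i v)
    - MvPolynomial.C (2⁻¹:ℂ) * (kd n u j * (W ^ 2) i v))

include hadd hsmul hleib hWW in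
lemma brWpow (b : ℕ) (i j u v : Fin n) :
    br (W i j) ((W ^ b) u v) =
      MvPolynomial.C (2⁻¹:ℂ) *
        ∑ m ∈ Finset.range b,
          ((W ^ (m+2)) u j * (W ^ (b-1-m)) i v - (W ^ m) u j * (W ^ (b+1-m)) i v) := by
  induction b generalizing u v with
  | zero =>
    rw [pow_zero, Matrix.one_apply]
    simp only [Finset.range_zero, Finset.sum_empty, mul_zero]
    split_ifs with h
    · exact br_one br hleib _
    · exact br_zero br hsmul _
  | succ b ih =>
    conv_lhs => rw [pow_succ, Matrix.mul_apply]
    rw [br_sum br hadd hsmul]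
    simp only [hleib, ih, hWW]
    trans (MvPolynomial.C (2⁻¹:ℂ) *
        ∑ m ∈ Finset.range b,
          ((W ^ (m+2)) u j * ((W ^ (b-1-m) * W) i v) - (W ^ m) u j * ((W ^ (b+1-m) * W) i v))
      + MvPolynomial.C (2⁻¹:ℂ) *
          ((W ^ b * W ^ 2) u j * kd n i v - (W ^ b) u j * (W ^ 2) i v))
    · rw [Finset.sum_add_distrib]
      congr 1
      · rw [Finset.mul_sum]
        calc ∑ p, (MvPolynomial.C (2⁻¹:ℂ) *
                ∑ m ∈ Finset.range b,
                  ((W ^ (m+2)) u j * (W ^ (b-1-m)) i p - (W ^ m) u j * (W ^ (b+1-m)) i p)) * W p v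
            = ∑ p, ∑ m ∈ Finset.range b, MvPolynomial.C (2⁻¹:ℂ) *
                (((W ^ (m+2)) u j * (W ^ (b-1-m)) i p - (W ^ m) u j * (W ^ (b+1-m)) i p) * W p v) := by
              refine Finset.sum_congr rfl fun p _ => ?_
              rw [Finset.mul_sum, Finset.sum_mul]
              exact Finset.sum_congr rfl fun m _ => by ring
          _ = ∑ m ∈ Finset.range b, ∑ p, MvPolynomial.C (2⁻¹:ℂ) *
                (((W ^ (m+2)) u j * (W ^ (b-1-m)) i p - (W ^ m) u j * (W ^ (b+1-m)) i p) * W p v) :=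
              Finset.sum_comm
          _ = _ := by
              refine Finset.sum_congr rfl fun m _ => ?_
              simp only [Matrix.mul_apply, Finset.mul_sum, mul_sub, Finset.sum_mul,
                ← Finset.sum_sub_distrib]
              exact Finset.sum_congr rfl fun p _ => by ring
      · trans (MvPolynomial.C (2⁻¹:ℂ) *
            ((∑ p, (W ^ b) u p * (W ^ 2) p j) * kd n i v
              - (∑ p, (W ^ b) u p * kd n p j) * (W ^ 2) i v))
        · simp only [mul_sub, Finset.mul_sum, Finset.sum_mul, ← Finset.sum_sub_distrib]
          exact Finset.sum_congr rfl fun p _ => by ring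
        · rw [kdsum2 (fun p => (W ^ b) u p) j, ← Matrix.mul_apply]
    · have hS : (∑ m ∈ Finset.range b,
            ((W ^ (m+2)) u j * ((W ^ (b-1-m) * W) i v) - (W ^ m) u j * ((W ^ (b+1-m) * W) i v)))
          = ∑ m ∈ Finset.range b,
            ((W ^ (m+2)) u j * (W ^ (b+1-1-m)) i v - (W ^ m) u j * (W ^ (b+1+1-m)) i v) :=
        Finset.sum_congr rfl fun m hm => by
          have hmb := Finset.mem_range.mp hm
          have h1 : b + 1 - 1 - m = b - 1 - m + 1 := by omega
          have h2 : b + 1 + 1 - m = b + 1 - m + 1 := by omega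
          rw [h1, h2, pow_succ W (b-1-m), pow_succ W (b+1-m)]
      have hT : (W ^ b * W ^ 2) u j * kd n i v - (W ^ b) u j * (W ^ 2) i v
          = (W ^ (b+2)) u j * (W ^ (b+1-1-b)) i v - (W ^ b) u j * (W ^ (b+1+1-b)) i v := by
        have h1 : b + 1 - 1 - b = 0 := by omega
        have h2 : b + 1 + 1 - b = 2 := by omega
        rw [h1, h2, pow_zero, pow_add]
        simp [kd, Matrix.one_apply]
      rw [Finset.sum_range_succ, ← hS, ← hT]
      ring

include hadd hsmul hleib hWW in
lemma brWtrace (b : ℕ) (i j : Fin n) :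
    br (W i j) (Matrix.trace (W ^ b)) = 0 := by
  rw [Matrix.trace]
  simp only [Matrix.diag_apply]
  rw [br_sum br hadd hsmul]
  simp only [brWpow br hadd hsmul hleib W hWW]
  rw [← Finset.mul_sum, Finset.sum_comm]
  have hz : (∑ m ∈ Finset.range b, ∑ x : Fin n,
      ((W ^ (m+2)) x j * (W ^ (b-1-m)) i x - (W ^ m) x j * (W ^ (b+1-m)) i x)) = 0 := by
    refine Finset.sum_eq_zero fun m hm => ?_
    have hmb := Finset.mem_range.mp hm
    rw [Finset.sum_sub_distrib, sub_eq_zero]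
    have e1 : ∑ u, (W ^ (m+2)) u j * (W ^ (b-1-m)) i u = (W ^ (b+1)) i j := by
      conv_rhs => rw [show b + 1 = (b-1-m) + (m+2) from by omega, pow_add, Matrix.mul_apply]
      exact Finset.sum_congr rfl fun u _ => by ring
    have e2 : ∑ u, (W ^ m) u j * (W ^ (b+1-m)) i u = (W ^ (b+1)) i j := by
      conv_rhs => rw [show b + 1 = (b+1-m) + m from by omega, pow_add, Matrix.mul_apply]
      exact Finset.sum_congr rfl fun u _ => by ring
    rw [e1, e2]
  rw [hz, mul_zero]

include hadd hsmul hleib hanti hWW in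
lemma brtraceWpow (b a : ℕ) (u v : Fin n) :
    br (Matrix.trace (W ^ b)) ((W ^ a) u v) = 0 := by
  induction a generalizing u v with
  | zero =>
    rw [pow_zero, Matrix.one_apply]
    split_ifs with h
    · exact br_one br hleib _
    · exact br_zero br hsmul _
  | succ a ih =>
    conv_lhs => rw [pow_succ, Matrix.mul_apply]
    rw [br_sum br hadd hsmul]
    refine Finset.sum_eq_zero fun p _ => ?_
    rw [hleib, ih]
    have : br (Matrix.trace (W ^ b)) (W p v) = 0 := by
      rw [hanti, brWtrace br hadd hsmul hleib W hWW]
      simp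
    rw [this]
    simp

include hadd hsmul hleib hanti hWW in
lemma brWtracetrace (a b : ℕ) :
    br (Matrix.trace (W ^ a)) (Matrix.trace (W ^ b)) = 0 := by
  conv_lhs => rw [Matrix.trace]
  simp only [Matrix.diag_apply]
  rw [br_sum' br hadd hsmul hanti]
  refine Finset.sum_eq_zero fun u _ => ?_
  rw [hanti, brtraceWpow br hadd hsmul hleib hanti W hWW b a u u, neg_zero]

end Pow

end Gen
end Aux


/-- the traces of powers of `X·Z` pairwise commute under the quasi-Poisson bracket. -/
theorem trace_pow_XZ_bracket_trace_pow_XZ (n : ℕ) (hn : 1 ≤ n)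
    (br : Oring n → Oring n → Oring n)
    (hadd : ∀ f g h : Oring n, br f (g + h) = br f g + br f h)
    (hsmul : ∀ (c : ℂ) (f g : Oring n), br f (c • g) = c • br f g)
    (hleib : ∀ f g h : Oring n, br f (g * h) = br f g * h + g * br f h)
    (hanti : ∀ f g : Oring n, br f g = - br g f)
    (hXX : ∀ i j u v : Fin n,
      br (Xm n i j) (Xm n u v) =
        (2⁻¹ : ℂ) • ((Xm n ^ 2) u j * kd n i v) - (2⁻¹ : ℂ) • (kd n u j * (Xm n ^ 2) i v))
    (hZZ : ∀ i j u v : Fin n,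
      br (Zm n i j) (Zm n u v) =
        (2⁻¹ : ℂ) • (kd n u j * (Zm n ^ 2) i v) - (2⁻¹ : ℂ) • ((Zm n ^ 2) u j * kd n i v))
    (hXZ : ∀ i j u v : Fin n,
      br (Xm n i j) (Zm n u v) =
        (2⁻¹ : ℂ) • ((Zm n * Xm n) u j * kd n i v)
          + (2⁻¹ : ℂ) • (kd n u j * (Xm n * Zm n) i v)
          + (2⁻¹ : ℂ) • (Zm n u j * Xm n i v)
          - (2⁻¹ : ℂ) • (Xm n u j * Zm n i v))
    (a b : ℕ) :
    br (Matrix.trace ((Xm n * Zm n) ^ a)) (Matrix.trace ((Xm n * Zm n) ^ b)) = 0 := by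
  exact brWtracetrace br hadd hsmul hleib hanti (Xm n * Zm n)
    (brAA br hadd hsmul hleib hanti hXX hZZ hXZ) a b
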